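/- If f ∈ ℂ[x] has degree d ≥ 1 and α is a complex root of f, then |α| ≤ 2·max over 1 ≤ i ≤ d of (|a_{d−i}|/|a_d|)^{1/i} (Knuth's root bound). -/

import Mathlib

open Polynomial

lemma knuth_geom_aux (d : ℕ) :
    ∑ j ∈ Finset.range d, ((2:ℝ))⁻¹ ^ (d - j) = 1 - (2:ℝ)⁻¹ ^ d := by
  induction d with
  | zero => simp
  | succ n ih =>
    rw [Finset.sum_range_succ]
    have h1 : ∑ j ∈ Finset.range n, ((2:ℝ))⁻¹ ^ (n + 1 - j)
        = 2⁻¹ * ∑ j ∈ Finset.range n, ((2:ℝ))⁻¹ ^ (n - j) := by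
      rw [Finset.mul_sum]
      apply Finset.sum_congr rfl
      intro j hj
      have : n + 1 - j = (n - j) + 1 := by
        have := Finset.mem_range.mp hj; omega
      rw [this, pow_succ]; ring
    rw [h1, ih]
    have : n + 1 - n = 1 := by omega
    rw [this]
    ring

/-- Knuth's root bound: if `f` has degree `d ≥ 1` and `α` is a complex root of `f`,
then `|α| ≤ 2 · max_{1 ≤ i ≤ d} (|a_{d−i}|/|a_d|)^{1/i}`. -/
theorem knuth_root_bound (f : Polynomial ℂ) (d : ℕ) (hd : f.natDegree = d)
    (hd1 : 1 ≤ d) (hne : (Finset.Icc 1 d).Nonempty := Finset.nonempty_Icc.mpr hd1)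
    (α : ℂ) (hα : f.eval α = 0) :
    ‖α‖ ≤ 2 * (Finset.Icc 1 d).sup' hne
      (fun i => (‖f.coeff (d - i)‖ / ‖f.leadingCoeff‖) ^ ((1 : ℝ) / i)) := by
  set c := ‖f.leadingCoeff‖ with hc
  set B := (Finset.Icc 1 d).sup' hne
      (fun i => (‖f.coeff (d - i)‖ / c) ^ ((1 : ℝ) / i)) with hB
  have hf0 : f ≠ 0 := by
    intro h
    rw [h] at hd
    simp at hd
    omega
  have hcpos : 0 < c := by
    rw [hc]
    exact (norm_pos_iff.mpr (leadingCoeff_ne_zero.mpr hf0))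
  have hB0 : 0 ≤ B := by
    have h1 : (1:ℕ) ∈ Finset.Icc 1 d := by
      simp [hd1]
    calc (0:ℝ) ≤ (‖f.coeff (d - 1)‖ / c) ^ ((1 : ℝ) / (1:ℕ)) :=
          Real.rpow_nonneg (by positivity) _
      _ ≤ B := Finset.le_sup' (fun i => (‖f.coeff (d - i)‖ / c) ^ ((1 : ℝ) / i)) h1
  by_contra hcon
  push_neg at hcon
  set r := ‖α‖ with hr
  have hrpos : 0 < r := lt_of_le_of_lt (by positivity) hcon
  -- coefficient bound
  have hcoeff : ∀ j < d, ‖f.coeff j‖ ≤ c * B ^ (d - j) := by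
    intro j hj
    have hi : d - j ∈ Finset.Icc 1 d := by
      simp; omega
    have hle : (‖f.coeff (d - (d - j))‖ / c) ^ ((1 : ℝ) / (d - j : ℕ)) ≤ B :=
      Finset.le_sup' (fun i => (‖f.coeff (d - i)‖ / c) ^ ((1 : ℝ) / i)) hi
    rw [show d - (d - j) = j by omega] at hle
    have hnz : ((d - j : ℕ) : ℝ) ≠ 0 := by
      have : 1 ≤ d - j := by omega
      positivity
    have hx0 : (0:ℝ) ≤ ‖f.coeff j‖ / c := by positivity
    have h2 : ‖f.coeff j‖ / c ≤ B ^ (d - j) := by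
      have h3 := Real.rpow_le_rpow (Real.rpow_nonneg hx0 _) hle
        (by positivity : (0:ℝ) ≤ ((d - j : ℕ) : ℝ))
      rwa [← Real.rpow_mul hx0, one_div, inv_mul_cancel₀ hnz, Real.rpow_one,
        Real.rpow_natCast] at h3
    calc ‖f.coeff j‖ = (‖f.coeff j‖ / c) * c := by
          field_simp
      _ ≤ B ^ (d - j) * c := mul_le_mul_of_nonneg_right h2 hcpos.le
      _ = c * B ^ (d - j) := by ring
  -- the eval identity
  have heval : (0:ℂ) = ∑ j ∈ Finset.range d, f.coeff j * α ^ j + f.coeff d * α ^ d := by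
    have h1 : f.eval α = ∑ j ∈ Finset.range (d + 1), f.coeff j * α ^ j := by
      rw [eval_eq_sum_range, hd]
    rw [Finset.sum_range_succ] at h1
    rw [← h1, hα]
  have key : f.coeff d * α ^ d = -∑ j ∈ Finset.range d, f.coeff j * α ^ j := by
    linear_combination -heval
  have habs : c * r ^ d ≤ ∑ j ∈ Finset.range d, ‖f.coeff j‖ * r ^ j := by
    have h1 : ‖f.coeff d * α ^ d‖
        ≤ ∑ j ∈ Finset.range d, ‖f.coeff j * α ^ j‖ := by
      rw [key, norm_neg]
      exact norm_sum_le _ _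
    have hcd : c = ‖f.coeff d‖ := by
      rw [hc, Polynomial.leadingCoeff, hd]
    simpa [norm_mul, norm_pow, ← hr, hcd] using h1
  have hterm : ∀ j ∈ Finset.range d, ‖f.coeff j‖ * r ^ j
      ≤ c * r ^ d * (2⁻¹ : ℝ) ^ (d - j) := by
    intro j hj
    have hjd : j < d := Finset.mem_range.mp hj
    have h1 := hcoeff j hjd
    have hBr : B ≤ r / 2 := by linarith
    have h2 : B ^ (d - j) ≤ (r / 2) ^ (d - j) := pow_le_pow_left₀ hB0 hBr _
    have hpow : r ^ (d - j) * r ^ j = r ^ d := by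
      rw [← pow_add]; congr 1; omega
    calc ‖f.coeff j‖ * r ^ j
        ≤ c * B ^ (d - j) * r ^ j := by
          exact mul_le_mul_of_nonneg_right h1 (by positivity)
      _ ≤ c * (r / 2) ^ (d - j) * r ^ j := by
          have := mul_le_mul_of_nonneg_left h2 hcpos.le
          exact mul_le_mul_of_nonneg_right this (by positivity)
      _ = c * r ^ d * (2⁻¹ : ℝ) ^ (d - j) := by
          rw [div_pow, div_eq_mul_inv, ← inv_pow]
          rw [← hpow]; ring
  have hsum : ∑ j ∈ Finset.range d, ‖f.coeff j‖ * r ^ j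
      ≤ c * r ^ d * (1 - (2⁻¹ : ℝ) ^ d) := by
    calc ∑ j ∈ Finset.range d, ‖f.coeff j‖ * r ^ j
        ≤ ∑ j ∈ Finset.range d, c * r ^ d * (2⁻¹ : ℝ) ^ (d - j) :=
          Finset.sum_le_sum hterm
      _ = c * r ^ d * ∑ j ∈ Finset.range d, (2⁻¹ : ℝ) ^ (d - j) := by
          rw [Finset.mul_sum]
      _ = c * r ^ d * (1 - (2⁻¹ : ℝ) ^ d) := by rw [knuth_geom_aux]
  have hfin : c * r ^ d ≤ c * r ^ d * (1 - (2⁻¹ : ℝ) ^ d) := le_trans habs hsum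
  nlinarith [pow_pos hrpos d, pow_pos (by norm_num : (0:ℝ) < 2⁻¹) d,
    mul_pos hcpos (pow_pos hrpos d)]
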